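/- Let z = x+iy, w = u+iv be complex numbers and let h_k be the L²-normalized Hermite functions on ℝ. Define π(z,w)h_k(ξ) = e^{i(zξ + zw/2)} h_k(ξ + w) (where h_k is entirely extended). Then ∫_ℝ |π(z,w)h_k(ξ)|² dξ = e^{uy - vx} · L_k^0(-2(y²+v²)) e^{y²+v²}. -/

import Mathlib

open MeasureTheory Complex Real Filter

noncomputable section

/-- Physicists' Hermite polynomials as entire functions. -/
def hermitePoly : ℕ → ℂ → ℂ
  | 0, _ => 1
  | 1, z => 2 * z
  | (k+2), z => 2 * z * hermitePoly (k+1) z - 2 * (k+1 : ℂ) * hermitePoly k z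

/-- Entire extension of the L²-normalized Hermite function hₖ. -/
def hermiteFn (k : ℕ) (z : ℂ) : ℂ :=
  ((Real.sqrt (2 ^ k * k.factorial * Real.sqrt π))⁻¹ : ℝ) *
    hermitePoly k z * Complex.exp (-z ^ 2 / 2)

/-- Laguerre polynomial of type `α` at a complex argument. -/
def laguerre (α : ℝ) (k : ℕ) (z : ℂ) : ℂ :=
  ∑ j ∈ Finset.range (k + 1),
    ((Real.Gamma (k + α + 1) / (Real.Gamma (j + α + 1) * (k - j).factorial) : ℝ) : ℂ) *
      (-z) ^ j / (j.factorial : ℂ)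

/-- The (complexified) projective Heisenberg representation in one dimension. -/
def pi1 (z w : ℂ) (F : ℂ → ℂ) (ξ : ℂ) : ℂ :=
  Complex.exp (Complex.I * (z * ξ + z * w / 2)) * F (ξ + w)

/-- complex dot product. -/
def cdot {n : ℕ} (z w : Fin n → ℂ) : ℂ := ∑ i, z i * w i

/-- n-dimensional Hermite function Φ_α, entirely extended. -/
def HermitePhi {n : ℕ} (α : Fin n → ℕ) (z : Fin n → ℂ) : ℂ := ∏ i, hermiteFn (α i) (z i)

/-- The complexified projective representation π(z,w) in n dimensions. -/
def piN {n : ℕ} (z w : Fin n → ℂ) (F : (Fin n → ℂ) → ℂ) (ξ : Fin n → ℂ) : ℂ :=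
  Complex.exp (Complex.I * (cdot z ξ + cdot z w / 2)) * F (fun i => ξ i + w i)

/-- coercion of real vectors into ℂⁿ. -/
def cv {n : ℕ} (x : Fin n → ℝ) : Fin n → ℂ := fun i => (x i : ℂ)

/-- special Hermite functions Φ_{α,β}(z,w). -/
def specialHermite {n : ℕ} (α β : Fin n → ℕ) (z w : Fin n → ℂ) : ℂ :=
  (((2 * π) ^ (-(n : ℝ) / 2) : ℝ) : ℂ) *
    ∫ ξ : Fin n → ℝ, piN z w (HermitePhi α) (cv ξ) * (starRingEnd ℂ) (HermitePhi β (cv ξ))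

/-- multi-indices of length k. -/
def multiIndex (n k : ℕ) : Finset (Fin n → ℕ) :=
  (Fintype.piFinset fun _ => Finset.range (k + 1)).filter fun α => ∑ i, α i = k

/-- Hermite projection kernel Φ_k(z,w), entirely extended. -/
def PhiK (n k : ℕ) (z w : Fin n → ℂ) : ℂ :=
  ∑ α ∈ multiIndex n k, HermitePhi α z * HermitePhi α w

/-- Hermite coefficient (f, Φ_α). -/
def hermiteCoeff {n : ℕ} (f : (Fin n → ℝ) → ℂ) (α : Fin n → ℕ) : ℂ :=
  ∫ ξ : Fin n → ℝ, f ξ * (starRingEnd ℂ) (HermitePhi α (cv ξ))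

/-- ‖P_k f‖₂². -/
def projNormSq {n : ℕ} (f : (Fin n → ℝ) → ℂ) (k : ℕ) : ℝ :=
  ∑ α ∈ multiIndex n k, ‖hermiteCoeff f α‖ ^ 2

/-- The action of σ ∈ U(n) on ℂⁿ × ℂⁿ, σ·(z,w) = (a·z - b·w, a·w + b·z) for σ = a + ib. -/
def uAction {n : ℕ} (σ : Matrix.unitaryGroup (Fin n) ℂ) (zw : (Fin n → ℂ) × (Fin n → ℂ)) :
    (Fin n → ℂ) × (Fin n → ℂ) :=
  (fun i => ∑ j, ((((σ : Matrix (Fin n) (Fin n) ℂ) i j).re : ℂ) * zw.1 j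
      - (((σ : Matrix (Fin n) (Fin n) ℂ) i j).im : ℂ) * zw.2 j),
   fun i => ∑ j, ((((σ : Matrix (Fin n) (Fin n) ℂ) i j).re : ℂ) * zw.2 j
      + (((σ : Matrix (Fin n) (Fin n) ℂ) i j).im : ℂ) * zw.1 j))

/-- Laguerre function of type n-1, entirely extended: φ_k(z,w). -/
def laguerrePhi (n k : ℕ) (z w : Fin n → ℂ) : ℂ :=
  laguerre (n - 1 : ℝ) k ((cdot z z + cdot w w) / 2) * Complex.exp (-(cdot z z + cdot w w) / 4)

/-- the constant k!(n-1)!/(k+n-1)!. -/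
def lagRatio (n k : ℕ) : ℝ := (k.factorial * (n - 1).factorial : ℝ) / ((k + n - 1).factorial : ℝ)

open Topology

/-- polynomial version -/
def hP : ℕ → Polynomial ℂ
  | 0 => 1
  | 1 => Polynomial.C 2 * Polynomial.X
  | (k+2) => Polynomial.C 2 * Polynomial.X * hP (k+1) - Polynomial.C (2*(k+1) : ℂ) * hP k

lemma hP_eval : ∀ k (z : ℂ), (hP k).eval z = hermitePoly k z := by
  have H : ∀ k, (∀ z, (hP k).eval z = hermitePoly k z) ∧
      (∀ z, (hP (k+1)).eval z = hermitePoly (k+1) z) := by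
    intro k
    induction k with
    | zero => constructor <;> intro z <;> simp [hP, hermitePoly]
    | succ n ih =>
      refine ⟨ih.2, fun z => ?_⟩
      show (hP (n+2)).eval z = hermitePoly (n+2) z
      rw [hP, hermitePoly]
      simp [ih.1 z, ih.2 z]
  exact fun k => (H k).1

lemma hP_succ_succ (k : ℕ) : hP (k+2) = Polynomial.C 2 * Polynomial.X * hP (k+1)
    - Polynomial.C 2 * Polynomial.C ((k:ℂ)+1) * hP k := by
  rw [hP, map_mul]

lemma hP_deriv : ∀ k, (hP (k+1)).derivative = Polynomial.C 2 * Polynomial.C ((k:ℂ)+1) * hP k := by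
  have H : ∀ k, (hP (k+1)).derivative = Polynomial.C 2 * Polynomial.C ((k:ℂ)+1) * hP k ∧
      (hP (k+2)).derivative = Polynomial.C 2 * Polynomial.C ((k:ℂ)+2) * hP (k+1) := by
    intro k
    induction k with
    | zero =>
      constructor
      · simp [hP]
      · rw [hP_succ_succ]
        simp [hP]
        simp only [map_add, map_ofNat, map_one]
        ring
    | succ n ih =>
      have h2 : ((n:ℂ)+1)+1 = (n:ℂ)+2 := by ring
      have h3 : ((n:ℂ)+1)+2 = (n:ℂ)+3 := by ring
      refine ⟨by push_cast; rw [h2]; exact ih.2, ?_⟩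
      push_cast
      rw [h3]
      show Polynomial.derivative (hP ((n+1)+2)) = Polynomial.C 2 * Polynomial.C ((n:ℂ)+3) * hP (n+2)
      rw [hP_succ_succ]
      simp only [Polynomial.derivative_sub, Polynomial.derivative_mul, Polynomial.derivative_C,
        Polynomial.derivative_X, ih.1, ih.2]
      rw [hP_succ_succ]
      push_cast
      simp only [map_add, map_ofNat, map_one]
      ring
  exact fun k => (H k).1


lemma hP_zero : hP 0 = 1 := rfl
lemma hP_one : hP 1 = Polynomial.C 2 * Polynomial.X := rfl

lemma integrable_xn_gauss (n : ℕ) :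
    Integrable (fun x : ℝ => x ^ n * Real.exp (-x^2)) := by
  have h : (-1 : ℝ) < (n : ℝ) := lt_of_lt_of_le neg_one_lt_zero n.cast_nonneg
  simpa [Real.rpow_natCast] using integrable_rpow_mul_exp_neg_mul_sq one_pos h

lemma tendsto_xn_gauss_atTop (n : ℕ) :
    Tendsto (fun x : ℝ => x ^ n * Real.exp (-x^2)) atTop (𝓝 0) := by
  refine squeeze_zero' ?_ ?_ (tendsto_pow_mul_exp_neg_atTop_nhds_zero n)
  · filter_upwards [eventually_ge_atTop (0:ℝ)] with x hx
    positivity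
  · filter_upwards [eventually_ge_atTop (1:ℝ)] with x hx
    have h1 : x ≤ x ^ 2 := by nlinarith
    have := Real.exp_le_exp.2 (neg_le_neg h1)
    exact mul_le_mul_of_nonneg_left this (by positivity)

lemma tendsto_xn_gauss_atBot (n : ℕ) :
    Tendsto (fun x : ℝ => x ^ n * Real.exp (-x^2)) atBot (𝓝 0) := by
  have h := ((tendsto_xn_gauss_atTop n).comp tendsto_neg_atBot_atTop).const_mul ((-1:ℝ)^n)
  rw [mul_zero] at h
  refine h.congr fun x => ?_
  simp only [Function.comp_apply, neg_sq]
  rw [← mul_assoc, ← mul_pow]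
  ring_nf

lemma poly_gauss_eq_sum (Q : Polynomial ℂ) (x : ℝ) :
    Q.eval ↑x * Complex.exp (-(x:ℂ)^2) =
      ∑ i ∈ Finset.range (Q.natDegree + 1),
        Q.coeff i * ((x ^ i * Real.exp (-x^2) : ℝ) : ℂ) := by
  rw [Polynomial.eval_eq_sum_range, Finset.sum_mul]
  refine Finset.sum_congr rfl fun i _ => ?_
  push_cast [Complex.ofReal_exp]
  ring

lemma integrable_poly_gauss (Q : Polynomial ℂ) :
    Integrable fun x : ℝ => Q.eval ↑x * Complex.exp (-(x:ℂ)^2) := by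
  have h : Integrable fun x : ℝ => ∑ i ∈ Finset.range (Q.natDegree + 1),
      Q.coeff i * ((x ^ i * Real.exp (-x^2) : ℝ) : ℂ) :=
    integrable_finset_sum _ fun i _ => ((integrable_xn_gauss i).ofReal).const_mul _
  exact h.congr (Filter.Eventually.of_forall fun x => (poly_gauss_eq_sum Q x).symm)

lemma tendsto_poly_gauss (Q : Polynomial ℂ) (l : Filter ℝ)
    (hx : ∀ n : ℕ, Tendsto (fun x : ℝ => x ^ n * Real.exp (-x^2)) l (𝓝 0)) :
    Tendsto (fun x : ℝ => Q.eval ↑x * Complex.exp (-(x:ℂ)^2)) l (𝓝 0) := by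
  have h : Tendsto (fun x : ℝ => ∑ i ∈ Finset.range (Q.natDegree + 1),
      Q.coeff i * ((x ^ i * Real.exp (-x^2) : ℝ) : ℂ)) l (𝓝 0) := by
    have : (0 : ℂ) = ∑ i ∈ Finset.range (Q.natDegree + 1), Q.coeff i * ((0:ℝ) : ℂ) := by simp
    rw [this]
    refine tendsto_finset_sum _ fun i _ => ?_
    exact (((Complex.continuous_ofReal.tendsto 0).comp (hx i)).const_mul _)
  exact h.congr fun x => (poly_gauss_eq_sum Q x).symm

lemma integral_deriv_gauss_zero (Q : Polynomial ℂ) :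
    ∫ x : ℝ, (Q.derivative - Polynomial.C 2 * Polynomial.X * Q).eval ↑x
      * Complex.exp (-(x:ℂ)^2) = 0 := by
  set f : ℝ → ℂ := fun x => Q.eval ↑x * Complex.exp (-(x:ℂ)^2) with hf
  set g : ℝ → ℂ := fun x => (Q.derivative - Polynomial.C 2 * Polynomial.X * Q).eval ↑x
      * Complex.exp (-(x:ℂ)^2) with hg
  have hderiv : ∀ x : ℝ, HasDerivAt f (g x) x := by
    intro x
    have h1 : HasDerivAt (fun z : ℂ => Q.eval z * Complex.exp (-z^2))
        (Q.derivative.eval ↑x * Complex.exp (-(x:ℂ)^2)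
          + Q.eval ↑x * (Complex.exp (-(x:ℂ)^2) * (-(2 * (x:ℂ)^1)))) ↑x := by
      have hexp : HasDerivAt (fun z : ℂ => Complex.exp (-z^2))
          (Complex.exp (-(x:ℂ)^2) * (-((2:ℕ) * (x:ℂ)^1))) ↑x :=
        ((hasDerivAt_pow 2 ((x:ℝ):ℂ)).neg).cexp
      simpa using (Q.hasDerivAt ((x:ℝ):ℂ)).fun_mul hexp
    have h2 := h1.comp_ofReal
    convert h2 using 1
    simp only [hg, Polynomial.eval_sub, Polynomial.eval_mul, Polynomial.eval_C,
      Polynomial.eval_X]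
    ring
  have hint : Integrable g := integrable_poly_gauss _
  have htop : Tendsto f atTop (𝓝 0) := tendsto_poly_gauss Q _ tendsto_xn_gauss_atTop
  have hbot : Tendsto f atBot (𝓝 0) := tendsto_poly_gauss Q _ tendsto_xn_gauss_atBot
  have h1 : ∫ x in Set.Ioi (0:ℝ), g x = 0 - f 0 :=
    integral_Ioi_of_hasDerivAt_of_tendsto' (fun x _ => hderiv x) hint.integrableOn htop
  have h2 : ∫ x in Set.Iic (0:ℝ), g x = f 0 - 0 :=
    integral_Iic_of_hasDerivAt_of_tendsto' (fun x _ => hderiv x) hint.integrableOn hbot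
  have h3 := intervalIntegral.integral_Iic_add_Ioi (b := (0:ℝ)) hint.integrableOn hint.integrableOn
  rw [← h3, h1, h2]
  ring

lemma hP_rec (k : ℕ) :
    Polynomial.C 2 * Polynomial.X * hP k - (hP k).derivative = hP (k+1) := by
  cases k with
  | zero => simp [hP_zero, hP_one]
  | succ m => rw [hP_deriv m, hP_succ_succ m]

lemma ibp_step (P : Polynomial ℂ) (k : ℕ) :
    ∫ x : ℝ, (P * hP (k+1)).eval ↑x * Complex.exp (-(x:ℂ)^2)
      = ∫ x : ℝ, (P.derivative * hP k).eval ↑x * Complex.exp (-(x:ℂ)^2) := by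
  have h0 := integral_deriv_gauss_zero (P * hP k)
  have key : (P * hP k).derivative - Polynomial.C 2 * Polynomial.X * (P * hP k)
      = P.derivative * hP k - P * hP (k+1) := by
    rw [Polynomial.derivative_mul, ← hP_rec k]; ring
  rw [key] at h0
  have h1 : ∀ x : ℝ, (P.derivative * hP k - P * hP (k+1)).eval ↑x * Complex.exp (-(x:ℂ)^2)
      = (P.derivative * hP k).eval ↑x * Complex.exp (-(x:ℂ)^2)
        - (P * hP (k+1)).eval ↑x * Complex.exp (-(x:ℂ)^2) := by
    intro x; rw [Polynomial.eval_sub]; ring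
  simp_rw [h1] at h0
  rw [integral_sub (integrable_poly_gauss _) (integrable_poly_gauss _)] at h0
  exact (sub_eq_zero.mp h0).symm

def EE (j k : ℕ) : ℂ := ∫ x : ℝ, (hP j * hP k).eval ↑x * Complex.exp (-(x:ℂ)^2)

lemma EE_comm (j k : ℕ) : EE j k = EE k j := by unfold EE; rw [mul_comm]

lemma EE_const_mul (c : ℂ) (A B : Polynomial ℂ) :
    ∫ x : ℝ, ((Polynomial.C c * A) * B).eval ↑x * Complex.exp (-(x:ℂ)^2)
      = c * ∫ x : ℝ, (A * B).eval ↑x * Complex.exp (-(x:ℂ)^2) := by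
  rw [← integral_const_mul]
  congr 1 with x
  simp [mul_assoc]

lemma gauss0 : ∫ x : ℝ, Complex.exp (-(x:ℂ)^2) = ((Real.sqrt π : ℝ) : ℂ) := by
  have h : ∀ x : ℝ, Complex.exp (-(x:ℂ)^2) = ((Real.exp (-x^2) : ℝ) : ℂ) := by
    intro x
    rw [Complex.ofReal_exp]
    push_cast
    ring_nf
  simp_rw [h]
  have h2 : (∫ x : ℝ, Real.exp (-x^2)) = Real.sqrt π := by simpa using integral_gaussian 1
  rw [← h2]
  exact integral_ofReal

lemma EE_succ_right (j k : ℕ) :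
    EE (j+1) (k+1) = 2 * ((j:ℂ)+1) * EE j k := by
  unfold EE
  rw [ibp_step, hP_deriv]
  rw [← integral_const_mul]
  congr 1 with x
  simp
  ring

lemma EE_zero_succ (k : ℕ) : EE 0 (k+1) = 0 := by
  unfold EE
  rw [ibp_step, hP_zero]
  simp

lemma EE_orth : ∀ k : ℕ, (∀ j, j < k → EE j k = 0) ∧
    EE k k = 2^k * (k.factorial : ℂ) * ((Real.sqrt π : ℝ) : ℂ) := by
  intro k
  induction k with
  | zero =>
    refine ⟨fun j hj => absurd hj (Nat.not_lt_zero j), ?_⟩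
    unfold EE
    rw [hP_zero]
    simpa using gauss0
  | succ n ih =>
    constructor
    · intro j hj
      cases j with
      | zero => exact EE_zero_succ n
      | succ m =>
        rw [EE_succ_right]
        rw [ih.1 m (by omega)]
        ring
    · rw [EE_succ_right, ih.2]
      rw [Nat.factorial_succ]
      push_cast
      ring

def Sm (k : ℕ) (a x : ℂ) : ℂ :=
  ∑ j ∈ Finset.range (k+1), (k.choose j : ℂ) * (2*a)^(k-j) * hermitePoly j x

lemma herm_mul_x (j : ℕ) (x : ℂ) :
    hermitePoly (j+1) x = 2*x*hermitePoly j x - 2*(j:ℂ)*hermitePoly (j-1) x := by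
  cases j with
  | zero => simp [hermitePoly]
  | succ m =>
    show hermitePoly (m+2) x = _
    rw [hermitePoly]
    push_cast
    simp only [Nat.add_sub_cancel]
    try ring

lemma Sm_hB (k : ℕ) (a x : ℂ) :
    ∑ j ∈ Finset.range (k+2), ((k+1).choose (j+1) : ℂ) * (2*a)^(k+1-j) * hermitePoly (j+1) x
      = 2*a * Sm (k+1) a x - (2*a)^(k+2) := by
  rw [Finset.sum_range_succ]
  rw [Nat.choose_succ_self]
  have h1 : ∀ j ∈ Finset.range (k+1),
      ((k+1).choose (j+1) : ℂ) * (2*a)^(k+1-j) * hermitePoly (j+1) x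
      = 2*a * (((k+1).choose (j+1) : ℂ) * (2*a)^(k-j) * hermitePoly (j+1) x) := by
    intro j hj
    have hjk : j ≤ k := Nat.lt_succ_iff.mp (Finset.mem_range.mp hj)
    rw [show k+1-j = (k-j)+1 from by omega, pow_succ]
    ring
  rw [Finset.sum_congr rfl h1, ← Finset.mul_sum]
  have h2 : Sm (k+1) a x
      = (∑ j ∈ Finset.range (k+1), ((k+1).choose (j+1) : ℂ) * (2*a)^(k-j) * hermitePoly (j+1) x)
        + (2*a)^(k+1) := by
    unfold Sm
    rw [Finset.sum_range_succ']
    simp [hermitePoly, Nat.succ_sub_succ]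
  rw [h2]
  rw [pow_succ]
  push_cast
  ring

lemma Sm_hA (k : ℕ) (a x : ℂ) :
    ∑ j ∈ Finset.range (k+2), ((k+1).choose j : ℂ) * (2*a)^(k+1-j) * hermitePoly (j+1) x
      = 2*x * Sm (k+1) a x - 2*((k:ℂ)+1) * Sm k a x := by
  have h1 : ∀ j ∈ Finset.range (k+2),
      ((k+1).choose j : ℂ) * (2*a)^(k+1-j) * hermitePoly (j+1) x
      = 2*x*(((k+1).choose j : ℂ) * (2*a)^(k+1-j) * hermitePoly j x)
        - ((k+1).choose j : ℂ) * (2*a)^(k+1-j) * (2*(j:ℂ)*hermitePoly (j-1) x) := by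
    intro j _
    rw [herm_mul_x]
    ring
  rw [Finset.sum_congr rfl h1, Finset.sum_sub_distrib, ← Finset.mul_sum]
  have h2 : (∑ j ∈ Finset.range (k+2), ((k+1).choose j : ℂ) * (2*a)^(k+1-j) * hermitePoly j x)
      = Sm (k+1) a x := rfl
  rw [h2]
  congr 1
  -- second sum equals 2(k+1) Sm k
  rw [Finset.sum_range_succ']
  simp only [Nat.cast_zero, mul_zero, zero_mul, add_zero, Nat.choose_zero_right, Nat.cast_one]
  have h3 : ∀ j ∈ Finset.range (k+1),
      ((k+1).choose (j+1) : ℂ) * (2*a)^(k+1-(j+1)) * (2*((j:ℂ)+1)*hermitePoly j x)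
      = 2*((k:ℂ)+1) * ((k.choose j : ℂ) * (2*a)^(k-j) * hermitePoly j x) := by
    intro j _
    have hc : ((k+1).choose (j+1) : ℂ) * ((j:ℂ)+1) = ((k:ℂ)+1) * (k.choose j : ℂ) := by
      have := Nat.add_one_mul_choose_eq k j
      have hc2 : ((Nat.succ k * k.choose j : ℕ) : ℂ) = (((k+1).choose (j+1) * (j+1) : ℕ) : ℂ) := by
        rw [this]
      push_cast at hc2
      linear_combination hc2.symm
    rw [Nat.succ_sub_succ]
    linear_combination ((2*a)^(k-j) * hermitePoly j x * 2) * hc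
  have h4 : ∀ j ∈ Finset.range (k+1),
      ((k+1).choose (j+1) : ℂ) * (2*a)^(k+1-(j+1)) * (2*(((j+1):ℕ):ℂ)*hermitePoly ((j+1)-1) x)
      = 2*((k:ℂ)+1) * ((k.choose j : ℂ) * (2*a)^(k-j) * hermitePoly j x) := by
    intro j hj
    have := h3 j hj
    push_cast at this ⊢
    simpa [Nat.add_sub_cancel] using this
  rw [Finset.sum_congr rfl h4, ← Finset.mul_sum]
  rfl

lemma Sm_rec (k : ℕ) (a x : ℂ) :
    Sm (k+2) a x = 2*(x+a) * Sm (k+1) a x - 2*((k:ℂ)+1) * Sm k a x := by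
  have peel0 : Sm (k+2) a x
      = ∑ j ∈ Finset.range (k+2),
          ((k+2).choose (j+1) : ℂ) * (2*a)^(k+1-j) * hermitePoly (j+1) x
        + (2*a)^(k+2) := by
    unfold Sm
    rw [Finset.sum_range_succ']
    simp [hermitePoly, Nat.succ_sub_succ]
  have pascal : ∀ j ∈ Finset.range (k+2),
      ((k+2).choose (j+1) : ℂ) * (2*a)^(k+1-j) * hermitePoly (j+1) x
      = ((k+1).choose j : ℂ) * (2*a)^(k+1-j) * hermitePoly (j+1) x
        + ((k+1).choose (j+1) : ℂ) * (2*a)^(k+1-j) * hermitePoly (j+1) x := by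
    intro j _
    have : ((k+2).choose (j+1) : ℂ) = ((k+1).choose j : ℂ) + ((k+1).choose (j+1) : ℂ) := by
      rw [← Nat.cast_add, ← Nat.choose_succ_succ]
    rw [this]; ring
  rw [peel0, Finset.sum_congr rfl pascal, Finset.sum_add_distrib, Sm_hA, Sm_hB]
  ring

lemma herm_add : ∀ k (a x : ℂ), hermitePoly k (x + a) = Sm k a x := by
  have H : ∀ k, (∀ a x : ℂ, hermitePoly k (x+a) = Sm k a x) ∧
      (∀ a x : ℂ, hermitePoly (k+1) (x+a) = Sm (k+1) a x) := by
    intro k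
    induction k with
    | zero =>
      constructor <;> intro a x <;> simp [hermitePoly, Sm, Finset.sum_range_succ] <;> try ring
    | succ n ih =>
      refine ⟨ih.2, fun a x => ?_⟩
      show hermitePoly (n+2) (x+a) = _
      rw [hermitePoly, ih.1 a x, ih.2 a x, Sm_rec]
      try ring
  exact fun k => (H k).1

lemma EE_ne {i j : ℕ} (h : i ≠ j) : EE i j = 0 := by
  rcases lt_or_gt_of_ne h with h' | h'
  · exact (EE_orth j).1 i h'
  · rw [show EE i j = EE j i from EE_comm i j]
    exact (EE_orth i).1 j h'

lemma J_int (k : ℕ) (a b : ℂ) :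
    ∫ x : ℝ, hermitePoly k (↑x + a) * hermitePoly k (↑x + b) * Complex.exp (-(x:ℂ)^2)
      = 2^k * (k.factorial : ℂ) * ((Real.sqrt π : ℝ) : ℂ) * laguerre 0 k (-2*(a*b)) := by
  have hpt : ∀ x : ℝ, hermitePoly k (↑x + a) * hermitePoly k (↑x + b) * Complex.exp (-(x:ℂ)^2)
      = ∑ i ∈ Finset.range (k+1), ∑ j ∈ Finset.range (k+1),
          ((k.choose i : ℂ) * (2*a)^(k-i) * ((k.choose j : ℂ) * (2*b)^(k-j)))
            * ((hP i * hP j).eval ↑x * Complex.exp (-(x:ℂ)^2)) := by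
    intro x
    rw [herm_add k a ↑x, herm_add k b ↑x]
    unfold Sm
    rw [Finset.sum_mul_sum, Finset.sum_mul]
    refine Finset.sum_congr rfl fun i _ => ?_
    rw [Finset.sum_mul]
    refine Finset.sum_congr rfl fun j _ => ?_
    rw [Polynomial.eval_mul, hP_eval, hP_eval]
    ring
  simp_rw [hpt]
  rw [integral_finset_sum _ (fun i _ => integrable_finset_sum _
    (fun j _ => ((integrable_poly_gauss (hP i * hP j)).const_mul _)))]
  have h2 : ∀ i ∈ Finset.range (k+1),
      (∫ x : ℝ, ∑ j ∈ Finset.range (k+1),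
        ((k.choose i : ℂ) * (2*a)^(k-i) * ((k.choose j : ℂ) * (2*b)^(k-j)))
          * ((hP i * hP j).eval ↑x * Complex.exp (-(x:ℂ)^2)))
      = ((k.choose i : ℂ))^2 * (2*a)^(k-i) * (2*b)^(k-i) * (2^i * (i.factorial : ℂ) * ((Real.sqrt π : ℝ) : ℂ)) := by
    intro i hi
    rw [integral_finset_sum _ (fun j _ => ((integrable_poly_gauss (hP i * hP j)).const_mul _))]
    have h3 : ∀ j ∈ Finset.range (k+1),
        (∫ x : ℝ, ((k.choose i : ℂ) * (2*a)^(k-i) * ((k.choose j : ℂ) * (2*b)^(k-j)))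
          * ((hP i * hP j).eval ↑x * Complex.exp (-(x:ℂ)^2)))
        = ((k.choose i : ℂ) * (2*a)^(k-i) * ((k.choose j : ℂ) * (2*b)^(k-j))) * EE i j := by
      intro j _
      rw [integral_const_mul]
      rfl
    rw [Finset.sum_congr rfl h3]
    rw [Finset.sum_eq_single_of_mem i hi (fun j _ hji => by rw [EE_ne (Ne.symm hji), mul_zero])]
    rw [show EE i i = 2^i * (i.factorial : ℂ) * ((Real.sqrt π : ℝ) : ℂ) from (EE_orth i).2]
    ring
  rw [Finset.sum_congr rfl h2]
  -- combinatorial identity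
  unfold laguerre
  rw [Finset.mul_sum, ← Finset.sum_range_reflect]
  refine Finset.sum_congr rfl fun j hj => ?_
  have hjk : j ≤ k := Nat.lt_succ_iff.mp (Finset.mem_range.mp hj)
  rw [show k + 1 - 1 - j = k - j from by omega, Nat.sub_sub_self hjk, Nat.choose_symm hjk]
  have hgk : Real.Gamma ((k:ℝ) + 0 + 1) = (k.factorial : ℝ) := by
    rw [add_zero, Real.Gamma_nat_eq_factorial]
  have hgj : Real.Gamma ((j:ℝ) + 0 + 1) = (j.factorial : ℝ) := by
    rw [add_zero, Real.Gamma_nat_eq_factorial]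
  rw [hgk, hgj]
  have hfac : ((k.choose j : ℂ)) * (j.factorial : ℂ) * ((k-j).factorial : ℂ) = (k.factorial : ℂ) := by
    exact_mod_cast congrArg (Nat.cast : ℕ → ℂ) (Nat.choose_mul_factorial_mul_factorial hjk)
  have hfacC : ((k.choose j : ℂ)) * (j.factorial : ℂ) * ((k-j).factorial : ℂ) = (k.factorial : ℂ) := hfac
  have hneg : (-(-2*(a*b)))^j = (2*(a*b))^j := by ring_nf
  have hjne : ((j.factorial : ℂ)) ≠ 0 := Nat.cast_ne_zero.mpr (Nat.factorial_ne_zero j)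
  have hjkne : (((k-j).factorial : ℂ)) ≠ 0 := Nat.cast_ne_zero.mpr (Nat.factorial_ne_zero _)
  have hcast : (((k.factorial : ℝ) / ((j.factorial : ℝ) * ((k-j).factorial : ℝ)) : ℝ) : ℂ)
      = (k.factorial : ℂ) / ((j.factorial : ℂ) * ((k-j).factorial : ℂ)) := by
    push_cast
    ring
  have hdiv : (k.factorial : ℂ) / ((j.factorial : ℂ) * ((k-j).factorial : ℂ)) = (k.choose j : ℂ) := by
    rw [div_eq_iff (mul_ne_zero hjne hjkne)]
    linear_combination -hfac
  rw [hcast, hneg, hdiv]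
  have hpow : (2:ℂ)^(k-j) * 2^j = 2^k := by
    rw [← pow_add]
    congr 1
    omega
  have hr : (2:ℂ)^k * (k.factorial:ℂ) * ((Real.sqrt π : ℝ):ℂ) * ((k.choose j : ℂ) * (2*(a*b))^j / (j.factorial:ℂ))
      = ((2:ℂ)^k * (k.factorial:ℂ) * ((Real.sqrt π : ℝ):ℂ) * ((k.choose j : ℂ) * (2*(a*b))^j)) / (j.factorial:ℂ) := by
    ring
  rw [hr, eq_div_iff hjne]
  linear_combination ((k.choose j : ℂ) * 2^j * 2^j * 2^(k-j) * a^j * b^j * ((Real.sqrt π : ℝ):ℂ)) * hfacC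
    + ((k.choose j : ℂ) * 2^j * a^j * b^j * ((Real.sqrt π : ℝ):ℂ) * (k.factorial:ℂ)) * hpow

lemma herm_conj : ∀ k (z : ℂ), hermitePoly k ((starRingEnd ℂ) z) = (starRingEnd ℂ) (hermitePoly k z) := by
  have H : ∀ k, (∀ z : ℂ, hermitePoly k ((starRingEnd ℂ) z) = (starRingEnd ℂ) (hermitePoly k z)) ∧
      (∀ z : ℂ, hermitePoly (k+1) ((starRingEnd ℂ) z) = (starRingEnd ℂ) (hermitePoly (k+1) z)) := by
    intro k
    induction k with
    | zero =>
      constructor <;> intro z <;> simp [hermitePoly, map_mul, map_ofNat]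
    | succ n ih =>
      refine ⟨ih.2, fun z => ?_⟩
      show hermitePoly (n+2) _ = _
      rw [hermitePoly, hermitePoly, ih.1 z, ih.2 z]
      simp [map_mul, map_sub, map_add, map_ofNat]
  exact fun k => (H k).1

lemma hnorm (W : ℂ) : ((‖W‖^2 : ℝ) : ℂ) = W * (starRingEnd ℂ) W := by
  rw [Complex.mul_conj]
  norm_cast
  rw [Complex.sq_norm]



/-- The L² norm of π(z,w)hₖ in terms of the Laguerre function at (2iy,2iv). -/
theorem norm_pi_hermite (x y u v : ℝ) (k : ℕ) :
    ((∫ ξ : ℝ, ‖pi1 ((x : ℂ) + (y : ℂ) * Complex.I) ((u : ℂ) + (v : ℂ) * Complex.I)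
          (hermiteFn k) (ξ : ℂ)‖ ^ 2 : ℝ) : ℂ) =
      ((Real.exp (u * y - v * x) : ℝ) : ℂ) *
        laguerre 0 k (-2 * (((y : ℂ)) ^ 2 + ((v : ℂ)) ^ 2)) *
        ((Real.exp (y ^ 2 + v ^ 2) : ℝ) : ℂ) := by
  set c : ℝ := (Real.sqrt (2 ^ k * k.factorial * Real.sqrt π))⁻¹ with hc
  set aa : ℂ := -(y:ℂ) + (v:ℂ)*Complex.I with haa
  set bb : ℂ := -(y:ℂ) - (v:ℂ)*Complex.I with hbb
  set K : ℝ := y^2 + v^2 + u*y - v*x with hK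
  have main : ∀ ξ : ℝ, ((‖pi1 ((x : ℂ) + (y : ℂ) * Complex.I) ((u : ℂ) + (v : ℂ) * Complex.I)
        (hermiteFn k) (ξ : ℂ)‖ ^ 2 : ℝ) : ℂ)
      = ((c^2 * Real.exp K : ℝ) : ℂ) *
          (hermitePoly k ((ξ + (u+y) : ℝ) + aa) * hermitePoly k ((ξ + (u+y) : ℝ) + bb)
            * Complex.exp (-((ξ + (u+y) : ℝ) : ℂ)^2)) := by
    intro ξ
    rw [hnorm]
    unfold pi1 hermiteFn
    rw [map_mul, map_mul, map_mul, ← Complex.exp_conj, ← Complex.exp_conj, ← herm_conj,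
      Complex.conj_ofReal]
    have hA : (starRingEnd ℂ) (Complex.I * (((x:ℂ)+(y:ℂ)*Complex.I) * (ξ:ℂ)
          + ((x:ℂ)+(y:ℂ)*Complex.I) * ((u:ℂ)+(v:ℂ)*Complex.I)/2))
        = -Complex.I * (((x:ℂ)-(y:ℂ)*Complex.I) * (ξ:ℂ)
          + ((x:ℂ)-(y:ℂ)*Complex.I) * ((u:ℂ)-(v:ℂ)*Complex.I)/2) := by
      simp [map_mul, map_add, map_div₀, Complex.conj_I, Complex.conj_ofReal, map_ofNat]
      ring
    have harg : (starRingEnd ℂ) ((ξ:ℂ) + ((u:ℂ)+(v:ℂ)*Complex.I))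
        = (ξ:ℂ) + ((u:ℂ)-(v:ℂ)*Complex.I) := by
      simp [map_add, map_mul, Complex.conj_I, Complex.conj_ofReal]
      ring
    have hB : (starRingEnd ℂ) (-((ξ:ℂ) + ((u:ℂ)+(v:ℂ)*Complex.I))^2/2)
        = -((ξ:ℂ) + ((u:ℂ)-(v:ℂ)*Complex.I))^2/2 := by
      rw [map_div₀, map_neg, map_pow, harg, Complex.conj_ofNat]
    rw [hA, harg, hB]
    have collect : ∀ (A B A' B' h1 h2 : ℂ),
        Complex.exp A * ((c:ℂ) * h1 * Complex.exp B)
          * (Complex.exp A' * ((c:ℂ) * h2 * Complex.exp B'))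
        = (c:ℂ) * (c:ℂ) * (h1*h2) * Complex.exp (A+B+(A'+B')) := by
      intros A B A' B' h1 h2
      rw [Complex.exp_add, Complex.exp_add, Complex.exp_add]
      ring
    rw [collect]
    have e1 : ((ξ + (u+y) : ℝ) : ℂ) + aa = (ξ:ℂ) + ((u:ℂ)+(v:ℂ)*Complex.I) := by
      rw [haa]; push_cast; ring
    have e2 : ((ξ + (u+y) : ℝ) : ℂ) + bb = (ξ:ℂ) + ((u:ℂ)-(v:ℂ)*Complex.I) := by
      rw [hbb]; push_cast; ring
    rw [e1, e2, Complex.ofReal_mul, Complex.ofReal_exp]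
    have hexp : Complex.I * (((x:ℂ)+(y:ℂ)*Complex.I) * (ξ:ℂ)
          + ((x:ℂ)+(y:ℂ)*Complex.I) * ((u:ℂ)+(v:ℂ)*Complex.I)/2)
          + (-((ξ:ℂ) + ((u:ℂ)+(v:ℂ)*Complex.I))^2/2)
          + (-Complex.I * (((x:ℂ)-(y:ℂ)*Complex.I) * (ξ:ℂ)
          + ((x:ℂ)-(y:ℂ)*Complex.I) * ((u:ℂ)-(v:ℂ)*Complex.I)/2)
          + (-((ξ:ℂ) + ((u:ℂ)-(v:ℂ)*Complex.I))^2/2))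
        = ((K:ℝ):ℂ) + (-((ξ + (u+y) : ℝ) : ℂ)^2) := by
      rw [hK]
      push_cast
      linear_combination (2*(y:ℂ)*(ξ:ℂ) + (x:ℂ)*(v:ℂ) + (y:ℂ)*(u:ℂ) - (v:ℂ)^2) * Complex.I_sq
    rw [hexp, Complex.exp_add]
    push_cast
    ring
  -- integrate
  have h0 : ((∫ ξ : ℝ, ‖pi1 ((x : ℂ) + (y : ℂ) * Complex.I) ((u : ℂ) + (v : ℂ) * Complex.I)
        (hermiteFn k) (ξ : ℂ)‖ ^ 2 : ℝ) : ℂ)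
      = ∫ ξ : ℝ, ((‖pi1 ((x : ℂ) + (y : ℂ) * Complex.I) ((u : ℂ) + (v : ℂ) * Complex.I)
        (hermiteFn k) (ξ : ℂ)‖ ^ 2 : ℝ) : ℂ) := (integral_ofReal).symm
  rw [h0, integral_congr_ae (Filter.Eventually.of_forall main), integral_const_mul]
  have hshift : (∫ ξ : ℝ, hermitePoly k ((ξ + (u+y) : ℝ) + aa) * hermitePoly k ((ξ + (u+y) : ℝ) + bb)
        * Complex.exp (-((ξ + (u+y) : ℝ) : ℂ)^2))
      = ∫ s : ℝ, hermitePoly k ((s:ℂ) + aa) * hermitePoly k ((s:ℂ) + bb)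
        * Complex.exp (-((s:ℝ) : ℂ)^2) :=
    integral_add_right_eq_self (fun s : ℝ => hermitePoly k ((s:ℂ) + aa) * hermitePoly k ((s:ℂ) + bb)
        * Complex.exp (-((s:ℝ) : ℂ)^2)) (u+y)
  rw [hshift, J_int k aa bb]
  have hab : (-2 : ℂ)*(aa*bb) = -2 * (((y : ℂ)) ^ 2 + ((v : ℂ)) ^ 2) := by
    rw [haa, hbb]
    linear_combination (2*(v:ℂ)^2) * Complex.I_sq
  rw [hab]
  have hcpos : (0:ℝ) < 2 ^ k * k.factorial * Real.sqrt π := by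
    have h1 : (0:ℝ) < Real.sqrt π := Real.sqrt_pos.mpr Real.pi_pos
    have h2 : (0:ℝ) < (k.factorial : ℝ) := by exact_mod_cast k.factorial_pos
    positivity
  have hceq : c^2 * (2 ^ k * k.factorial * Real.sqrt π) = 1 := by
    rw [hc, inv_pow, Real.sq_sqrt hcpos.le]
    exact inv_mul_cancel₀ (ne_of_gt hcpos)
  have hone : ((c^2 : ℝ) : ℂ) * ((2:ℂ)^k * (k.factorial:ℂ) * ((Real.sqrt π : ℝ):ℂ)) = 1 := by
    rw [show ((2:ℂ)^k * (k.factorial:ℂ) * ((Real.sqrt π : ℝ):ℂ))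
        = ((2 ^ k * k.factorial * Real.sqrt π : ℝ) : ℂ) from by push_cast; ring,
      ← Complex.ofReal_mul, hceq, Complex.ofReal_one]
  have hKsplit : Real.exp K = Real.exp (u*y - v*x) * Real.exp (y^2+v^2) := by
    rw [← Real.exp_add, hK]; ring_nf
  rw [Complex.ofReal_mul, hKsplit, Complex.ofReal_mul]
  linear_combination (((Real.exp (u*y-v*x) : ℝ):ℂ) * ((Real.exp (y^2+v^2) : ℝ):ℂ)
    * laguerre 0 k (-2 * (((y : ℂ)) ^ 2 + ((v : ℂ)) ^ 2))) * hone

end
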